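/- arXiv:1601.03191 — 5 statements merged into one kernel-verified Lean document; each statement's English description precedes it below -/
import Mathlib

section
/- The algebra C_W(u) is generated as a unital k-algebra by the elements g_s and e_s for s ∈ S; in particular, every generator e_t for t ∈ R lies in the unital subalgebra generated by {g_s : s ∈ S} ∪ {e_s : s ∈ S}. -/
open scoped Classical

noncomputable section

namespace CWpaper

variable {B : Type} {M : CoxeterMatrix B} {W : Type} [Group W] (cs : CoxeterSystem M W)
variable (k : Type) [CommRing k]

/-- The set of reflections of the Coxeter system, as a subtype. -/
abbrev Refl := {t : W // cs.IsReflection t}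

/-- Index type for the generators of `C_W(u)`: `inl i` indexes `g` generators,
`inr t` indexes `e` generators. -/
abbrev Gen := B ⊕ Refl cs

/-- The free-algebra generator corresponding to `g_s`. -/
def gf (i : B) : FreeAlgebra k (Gen cs) := FreeAlgebra.ι k (Sum.inl i)

/-- The free-algebra generator corresponding to `e_t`. -/
def ef (t : Refl cs) : FreeAlgebra k (Gen cs) := FreeAlgebra.ι k (Sum.inr t)

/-- A simple reflection, as a reflection. -/
def simpleR (i : B) : Refl cs := ⟨cs.simple i, cs.isReflection_simple i⟩

/-- Conjugate of a reflection by a group element. -/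
def conjR (w : W) (t : Refl cs) : Refl cs := ⟨w * t.1 * w⁻¹, t.2.conj w⟩

/-- The defining relations of the algebra `C_W(u)`. -/
inductive CWrel (u : B → k) : FreeAlgebra k (Gen cs) → FreeAlgebra k (Gen cs) → Prop
  | braid (i j : B) (h : M i j ≠ 0) :
      CWrel u (((CoxeterSystem.alternatingWord i j (M i j)).map (gf cs k)).prod)
              (((CoxeterSystem.alternatingWord j i (M i j)).map (gf cs k)).prod)
  | idem (t : Refl cs) : CWrel u (ef cs k t * ef cs k t) (ef cs k t)
  | comm (t₁ t₂ : Refl cs) : CWrel u (ef cs k t₁ * ef cs k t₂) (ef cs k t₂ * ef cs k t₁)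
  | conj (t t₁ : Refl cs) :
      CWrel u (ef cs k t * ef cs k t₁) (ef cs k t * ef cs k (conjR cs t.1 t₁))
  | move (i : B) (t : Refl cs) :
      CWrel u (gf cs k i * ef cs k t) (ef cs k (conjR cs (cs.simple i) t) * gf cs k i)
  | quad (i : B) :
      CWrel u (gf cs k i * gf cs k i)
        (1 + algebraMap k _ (u i - 1) * ef cs k (simpleR cs i) * (1 + gf cs k i))

variable (u : B → k)

/-- The algebra `C_W(u)`. -/
abbrev CW := RingQuot (CWrel cs k u)

/-- The generator `g_s` of `C_W(u)`. -/
def gCW (i : B) : CW cs k u := RingQuot.mkAlgHom k (CWrel cs k u) (gf cs k i)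

/-- The generator `e_t` of `C_W(u)`. -/
def eCW (t : Refl cs) : CW cs k u := RingQuot.mkAlgHom k (CWrel cs k u) (ef cs k t)

theorem eCW_commute (t₁ t₂ : Refl cs) : Commute (eCW cs k u t₁) (eCW cs k u t₂) := by
  have h := RingQuot.mkAlgHom_rel k (CWrel.comm (cs := cs) (k := k) (u := u) t₁ t₂)
  simp only [map_mul] at h
  unfold eCW
  exact h

/-- The product `e_J = ∏_{t ∈ J} e_t` for a finite set of reflections `J`. -/
def eJ (J : Finset (Refl cs)) : CW cs k u :=
  J.noncommProd (eCW cs k u) (fun t₁ _ t₂ _ _ => eCW_commute cs k u t₁ t₂)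

/-- `gg : W → C_W(u)` is the family `(g_w)_{w ∈ W}` iff for every reduced word
`l` for `w`, `gg w` is the product of the `g_s`, `s ∈ l`. -/
def IsGFamily (gg : W → CW cs k u) : Prop :=
  ∀ l : List B, cs.IsReduced l → gg (cs.wordProd l) = (l.map (gCW cs k u)).prod

end CWpaper

namespace CWpaper

/-- The algebra `C_W(u)` is generated as a unital `k`-algebra by the
elements `g_s` and `e_s` for `s ∈ S`; in particular every generator `e_t`, `t ∈ R`,
lies in the unital subalgebra generated by `{g_s : s ∈ S} ∪ {e_s : s ∈ S}`. -/
theorem statement0 {B : Type} {M : CoxeterMatrix B} {W : Type} [Group W]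
    (cs : CoxeterSystem M W) (k : Type) [CommRing k] (u : B → k)
    (hu : ∀ i j : B, IsConj (cs.simple i) (cs.simple j) → u i = u j) :
    Algebra.adjoin k
        (Set.range (gCW cs k u) ∪ Set.range (fun i => eCW cs k u (simpleR cs i))) = ⊤ ∧
      ∀ t : Refl cs,
        eCW cs k u t ∈ Algebra.adjoin k
          (Set.range (gCW cs k u) ∪ Set.range (fun i => eCW cs k u (simpleR cs i))) := by
  set A := Algebra.adjoin k
      (Set.range (gCW cs k u) ∪ Set.range (fun i => eCW cs k u (simpleR cs i))) with hA
  have hgmem : ∀ i : B, gCW cs k u i ∈ A := fun i =>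
    Algebra.subset_adjoin (Or.inl ⟨i, rfl⟩)
  have hesmem : ∀ i : B, eCW cs k u (simpleR cs i) ∈ A := fun i =>
    Algebra.subset_adjoin (Or.inr ⟨i, rfl⟩)
  -- double conjugation by a simple reflection is the identity
  have hdouble : ∀ (i : B) (t : Refl cs),
      conjR cs (cs.simple i) (conjR cs (cs.simple i) t) = t := by
    intro i t
    apply Subtype.ext
    simp [conjR, cs.inv_simple, mul_assoc, cs.simple_mul_simple_cancel_left,
      cs.simple_mul_simple_self]
  -- the key identity expressing e_{s t s} in terms of e_t, e_s, g_s
  have key : ∀ (i : B) (t : Refl cs),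
      eCW cs k u (conjR cs (cs.simple i) t) =
        gCW cs k u i * eCW cs k u t * gCW cs k u i -
          algebraMap k (CW cs k u) (u i - 1) *
            (eCW cs k u (simpleR cs i) * eCW cs k u t * (1 + gCW cs k u i)) := by
    intro i t
    set G := gCW cs k u i with hG
    set c := algebraMap k (CW cs k u) (u i - 1) with hc
    set Es := eCW cs k u (simpleR cs i) with hEs
    set t'' := conjR cs (cs.simple i) t with ht''
    have hmove : G * eCW cs k u t = eCW cs k u t'' * G := by
      have h := RingQuot.mkAlgHom_rel k (CWrel.move (cs := cs) (k := k) (u := u) i t)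
      simp only [map_mul, eCW, gCW] at h; exact h
    have hquad : G * G = 1 + c * Es * (1 + G) := by
      have h := RingQuot.mkAlgHom_rel k (CWrel.quad (cs := cs) (k := k) (u := u) i)
      simp only [map_mul, map_add, map_one, AlgHom.commutes, eCW, gCW] at h; exact h
    have hcomm : eCW cs k u t'' * Es = Es * eCW cs k u t'' := by
      have h := RingQuot.mkAlgHom_rel k
        (CWrel.comm (cs := cs) (k := k) (u := u) t'' (simpleR cs i))
      simp only [map_mul, eCW] at h; exact h
    have hconj : Es * eCW cs k u t'' = Es * eCW cs k u (conjR cs (cs.simple i) t'') := by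
      have h := RingQuot.mkAlgHom_rel k
        (CWrel.conj (cs := cs) (k := k) (u := u) (simpleR cs i) t'')
      simp only [map_mul, eCW, simpleR] at h; exact h
    have hswap : eCW cs k u t'' * Es = Es * eCW cs k u t := by
      rw [hcomm, hconj, ht'', hdouble]
    have calc1 : G * eCW cs k u t * G =
        eCW cs k u t'' + c * (Es * eCW cs k u t * (1 + G)) := by
      rw [hmove, mul_assoc, hquad, mul_add, mul_one]
      congr 1
      calc eCW cs k u t'' * (c * Es * (1 + G))
          = (eCW cs k u t'' * c) * (Es * (1 + G)) := by noncomm_ring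
        _ = (c * eCW cs k u t'') * (Es * (1 + G)) := by rw [Algebra.commutes]
        _ = c * ((eCW cs k u t'' * Es) * (1 + G)) := by noncomm_ring
        _ = c * (Es * eCW cs k u t * (1 + G)) := by rw [hswap]
    rw [eq_sub_iff_add_eq]
    exact calc1.symm
  -- membership of e_t for t a conjugate of a simple reflection by a word
  have memW : ∀ (l : List B) (i : B)
      (h : cs.IsReflection (cs.wordProd l * cs.simple i * (cs.wordProd l)⁻¹)),
      eCW cs k u ⟨cs.wordProd l * cs.simple i * (cs.wordProd l)⁻¹, h⟩ ∈ A := by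
    intro l
    induction l with
    | nil =>
      intro i h
      have : (⟨cs.wordProd [] * cs.simple i * (cs.wordProd [])⁻¹, h⟩ : Refl cs)
          = simpleR cs i := by
        apply Subtype.ext
        simp [simpleR]
      rw [this]
      exact hesmem i
    | cons j l ih =>
      intro i h
      have h' : cs.IsReflection (cs.wordProd l * cs.simple i * (cs.wordProd l)⁻¹) :=
        (cs.isReflection_simple i).conj _
      have heq : (⟨cs.wordProd (j :: l) * cs.simple i * (cs.wordProd (j :: l))⁻¹, h⟩ : Refl cs)
          = conjR cs (cs.simple j) ⟨cs.wordProd l * cs.simple i * (cs.wordProd l)⁻¹, h'⟩ := by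
        apply Subtype.ext
        simp only [conjR, cs.wordProd_cons, mul_inv_rev]
        group
      rw [heq, key]
      refine sub_mem (mul_mem (mul_mem (hgmem j) (ih i h')) (hgmem j)) ?_
      refine mul_mem (A.algebraMap_mem _) ?_
      exact mul_mem (mul_mem (hesmem j) (ih i h')) (add_mem A.one_mem (hgmem j))
  have emem : ∀ t : Refl cs, eCW cs k u t ∈ A := by
    rintro ⟨t, ht⟩
    obtain ⟨w, i, rfl⟩ := ht
    obtain ⟨l, rfl⟩ := cs.wordProd_surjective w
    exact memW l i _
  refine ⟨?_, emem⟩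
  rw [eq_top_iff]
  rintro x -
  obtain ⟨y, rfl⟩ := RingQuot.mkAlgHom_surjective k (CWrel cs k u) x
  induction y using FreeAlgebra.induction with
  | grade0 r => rw [AlgHom.commutes]; exact A.algebraMap_mem r
  | grade1 x =>
    rcases x with i | t
    · exact hgmem i
    · exact emem t
  | mul a b ha hb => rw [map_mul]; exact mul_mem ha hb
  | add a b ha hb => rw [map_add]; exact add_mem ha hb

end CWpaper
end
end

section
/- The k-linear map c : kM → k^L sending e_λ to φ_λ, where φ_λ(μ) = 1 if λ ≤ μ and φ_λ(μ) = 0 otherwise, is an isomorphism of k-algebras from the semigroup algebra kM onto the k-algebra k^L of functions L → k with pointwise operations. -/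
open scoped Classical

noncomputable section

namespace CWpaper

variable (k : Type) [CommRing k] (L : Type) [SemilatticeSup L]

/-- The band algebra `kM` of the finite join semilattice `L`:
the free `k`-module on basis `(e_λ)_{λ ∈ L}` with multiplication bilinearly
extending `e_λ e_μ = e_{λ ⊔ μ}`. -/
def BandAlgebra : Type := L →₀ k

instance : AddCommGroup (BandAlgebra k L) := Finsupp.instAddCommGroup
instance : Module k (BandAlgebra k L) := Finsupp.module L k

/-- The basis element `e_λ` of the band algebra. -/
def bandE (l : L) : BandAlgebra k L := Finsupp.single l 1

instance : Mul (BandAlgebra k L) :=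
  ⟨fun f g => f.sum fun a ca => g.sum fun b cb => Finsupp.single (a ⊔ b) (ca * cb)⟩

/-- The map `c : kM → k^L`, `e_λ ↦ φ_λ` where `φ_λ(μ) = 1` if `λ ≤ μ` and `0` otherwise,
extended `k`-linearly. -/
def bandToFun (f : BandAlgebra k L) : L → k :=
  fun μ => f.sum fun a ca => if a ≤ μ then ca else 0

/-- Identity identification of the band algebra with the finsupp type. -/
def tf (f : BandAlgebra k L) : L →₀ k := f

lemma bandToFun_single (l : L) (c : k) :
    bandToFun k L (Finsupp.single l c) = fun μ => if l ≤ μ then c else 0 := by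
  funext μ
  unfold bandToFun
  rw [Finsupp.sum_single_index (by simp)]

lemma bandToFun_add' (x y : BandAlgebra k L) :
    bandToFun k L (x + y) = bandToFun k L x + bandToFun k L y := by
  funext μ
  unfold bandToFun
  show (tf k L x + tf k L y).sum _ = _
  rw [Finsupp.sum_add_index' (by intro a; simp) (by intro a b₁ b₂; split <;> simp)]
  rfl

lemma bandToFun_smul' (r : k) (x : BandAlgebra k L) :
    bandToFun k L (r • x) = r • bandToFun k L x := by
  funext μ
  unfold bandToFun
  show (r • tf k L x).sum _ = r * (tf k L x).sum fun a ca => if a ≤ μ then ca else 0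
  rw [Finsupp.sum_smul_index (by intro a; simp), Finsupp.sum, Finsupp.sum, Finset.mul_sum]
  refine Finset.sum_congr rfl fun a _ => ?_
  split <;> simp

def evalHom (μ : L) : BandAlgebra k L →+ k where
  toFun f := bandToFun k L f μ
  map_zero' := by
    unfold bandToFun
    exact Finsupp.sum_zero_index
  map_add' x y := congrFun (bandToFun_add' k L x y) μ

lemma bandToFun_mul' (x y : BandAlgebra k L) :
    bandToFun k L (x * y) = bandToFun k L x * bandToFun k L y := by
  funext μ
  have hxy : x * y = (tf k L x).sum
      (fun a ca => (tf k L y).sum fun b cb =>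
        (Finsupp.single (a ⊔ b) (ca * cb) : BandAlgebra k L)) := rfl
  show evalHom k L μ (x * y) = evalHom k L μ x * evalHom k L μ y
  rw [hxy]
  erw [map_finsuppSum]
  have key : ∀ a ca, evalHom k L μ ((tf k L y).sum fun b cb =>
      (Finsupp.single (a ⊔ b) (ca * cb) : BandAlgebra k L)) =
      (if a ≤ μ then ca else 0) * evalHom k L μ y := by
    intro a ca
    erw [map_finsuppSum]
    have hy : evalHom k L μ y = (tf k L y).sum fun b cb => if b ≤ μ then cb else 0 := rfl
    rw [hy, Finsupp.mul_sum]
    refine Finset.sum_congr rfl fun b _ => ?_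
    have h1 : evalHom k L μ (Finsupp.single (a ⊔ b) (ca * tf k L y b) : BandAlgebra k L)
        = if a ⊔ b ≤ μ then ca * tf k L y b else 0 :=
      congrFun (bandToFun_single k L _ _) μ
    beta_reduce
    rw [h1, sup_le_iff]
    by_cases ha : a ≤ μ <;> by_cases hb : b ≤ μ <;> simp [ha, hb]
  have h2 : ((tf k L x).sum fun a ca => evalHom k L μ ((tf k L y).sum fun b cb =>
      (Finsupp.single (a ⊔ b) (ca * cb) : BandAlgebra k L)))
      = (tf k L x).sum fun a ca => (if a ≤ μ then ca else 0) * evalHom k L μ y :=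
    Finset.sum_congr rfl fun a _ => key a _
  erw [h2]
  rw [← Finsupp.sum_mul]
  rfl

lemma bandToFun_eq_sum [Fintype L] (f : BandAlgebra k L) (μ : L) :
    bandToFun k L f μ = ∑ b ∈ Finset.univ.filter (· ≤ μ), tf k L f b := by
  unfold bandToFun
  show (tf k L f).sum (fun a ca => if a ≤ μ then ca else 0) = _
  rw [Finsupp.sum_fintype _ _ (by intro a; simp), Finset.sum_filter]

lemma filter_le_eq [Fintype L] (μ : L) :
    Finset.univ.filter (· ≤ μ) = insert μ (Finset.univ.filter (· < μ)) := by
  ext b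
  simp [le_iff_lt_or_eq, or_comm]

lemma sum_le_split [Fintype L] (g : L → k) (μ : L) :
    ∑ b ∈ Finset.univ.filter (· ≤ μ), g b
      = g μ + ∑ b ∈ Finset.univ.filter (· < μ), g b := by
  rw [filter_le_eq, Finset.sum_insert (by simp)]

/-- Möbius-style inverse: the unique `f` with `∑_{b ≤ a} f b = φ a`. -/
def moeb [Fintype L] (φ : L → k) : L → k :=
  (Finite.to_wellFoundedLT (α := L)).wf.fix fun a ih =>
    φ a - ∑ b ∈ (Finset.univ.filter (· < a)).attach,
      ih b.1 (Finset.mem_filter.mp b.2).2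

lemma moeb_spec [Fintype L] (φ : L → k) (a : L) :
    moeb k L φ a = φ a - ∑ b ∈ Finset.univ.filter (· < a), moeb k L φ b := by
  unfold moeb
  rw [WellFounded.fix_eq]
  congr 1
  exact Finset.sum_attach _ _

/-- For a finite join semilattice `L`, the `k`-linear map
`c : kM → k^L`, `e_λ ↦ φ_λ`, is an isomorphism of `k`-algebras from the semigroup algebra
of the band `M` onto the algebra of functions `L → k` with pointwise operations. -/
theorem statement8 [Finite L] :
    (∀ l : L, bandToFun k L (bandE k L l) = fun μ => if l ≤ μ then (1 : k) else 0) ∧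
    Function.Bijective (bandToFun k L) ∧
    (∀ x y : BandAlgebra k L, bandToFun k L (x + y) = bandToFun k L x + bandToFun k L y) ∧
    (∀ (r : k) (x : BandAlgebra k L), bandToFun k L (r • x) = r • bandToFun k L x) ∧
    (∀ x y : BandAlgebra k L, bandToFun k L (x * y) = bandToFun k L x * bandToFun k L y) := by
  have : Fintype L := Fintype.ofFinite L
  refine ⟨fun l => bandToFun_single k L l 1, ⟨?_, ?_⟩, bandToFun_add' k L, bandToFun_smul' k L,
    bandToFun_mul' k L⟩
  · -- injective
    intro f g h
    suffices hfg : tf k L f = tf k L g from hfg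
    refine Finsupp.ext fun a => ?_
    refine (Finite.to_wellFoundedLT (α := L)).wf.induction
      (C := fun a => tf k L f a = tf k L g a) a ?_
    intro x ih
    have hx : ∑ b ∈ Finset.univ.filter (· ≤ x), tf k L f b
        = ∑ b ∈ Finset.univ.filter (· ≤ x), tf k L g b := by
      rw [← bandToFun_eq_sum, ← bandToFun_eq_sum, h]
    rw [sum_le_split, sum_le_split] at hx
    have hlt : ∑ b ∈ Finset.univ.filter (· < x), tf k L f b
        = ∑ b ∈ Finset.univ.filter (· < x), tf k L g b :=
      Finset.sum_congr rfl fun b hb => ih b (Finset.mem_filter.mp hb).2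
    rw [hlt] at hx
    exact add_right_cancel hx
  · -- surjective
    intro φ
    refine ⟨(Finsupp.equivFunOnFinite.symm (moeb k L φ) : L →₀ k), ?_⟩
    funext μ
    refine (bandToFun_eq_sum k L _ μ).trans ?_
    rw [sum_le_split]
    have hc : ∀ b : L, tf k L (Finsupp.equivFunOnFinite.symm (moeb k L φ) : L →₀ k) b
        = moeb k L φ b := fun b => rfl
    simp only [hc]
    rw [moeb_spec]
    ring

end CWpaper
end
end

section
/- Set a₀ = (1+g)(1−e), a₁ = e(1+g), a₂ = (g−1)(1−e), a₃ = (g−u)e in C_{A₁}(u). If 2(u+1) is invertible in k, then (a₀, a₁, a₂, a₃) is a k-basis of C_{A₁}(u) consisting of simultaneous eigenvectors for left multiplication by e and by g, with: e·a₀ = 0, e·a₁ = a₁, e·a₂ = 0, e·a₃ = a₃, and g·a₀ = a₀, g·a₁ = u·a₁, g·a₂ = −a₂, g·a₃ = −a₃. Consequently, for any λ ∈ k, g + λge acts on this basis with eigenvalues 1, u(1+λ), −1, −(1+λ). -/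
open scoped Classical

noncomputable section

namespace CWpaper

variable (k : Type) [CommRing k] (u : k)

/-- The defining relations of the algebra `C_{A₁}(u)`: two generators `g` (indexed by
`true`) and `e` (indexed by `false`) with `e² = e`, `ge = eg`,
`g² = 1 + (u−1)e(1+g)`. -/
inductive A1rel : FreeAlgebra k Bool → FreeAlgebra k Bool → Prop
  | idem : A1rel (FreeAlgebra.ι k false * FreeAlgebra.ι k false) (FreeAlgebra.ι k false)
  | comm : A1rel (FreeAlgebra.ι k true * FreeAlgebra.ι k false)
      (FreeAlgebra.ι k false * FreeAlgebra.ι k true)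
  | quad : A1rel (FreeAlgebra.ι k true * FreeAlgebra.ι k true)
      (1 + algebraMap k _ (u - 1) * FreeAlgebra.ι k false * (1 + FreeAlgebra.ι k true))

/-- The algebra `C_{A₁}(u)`. -/
abbrev CA1 : Type := RingQuot (A1rel k u)

/-- The generator `g` of `C_{A₁}(u)`. -/
def gA1 : CA1 k u := RingQuot.mkAlgHom k (A1rel k u) (FreeAlgebra.ι k true)

/-- The generator `e` of `C_{A₁}(u)`. -/
def eA1 : CA1 k u := RingQuot.mkAlgHom k (A1rel k u) (FreeAlgebra.ι k false)

/-- `a₀ = (1+g)(1−e)`. -/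
def a0 : CA1 k u := (1 + gA1 k u) * (1 - eA1 k u)
/-- `a₁ = e(1+g)`. -/
def a1 : CA1 k u := eA1 k u * (1 + gA1 k u)
/-- `a₂ = (g−1)(1−e)`. -/
def a2 : CA1 k u := (gA1 k u - 1) * (1 - eA1 k u)
/-- `a₃ = (g−u)e`. -/
def a3 : CA1 k u := (gA1 k u - algebraMap k _ u) * eA1 k u

lemma he : eA1 k u * eA1 k u = eA1 k u := by
  simpa [eA1, map_mul] using RingQuot.mkAlgHom_rel k (A1rel.idem (k := k) (u := u))

lemma hcomm : gA1 k u * eA1 k u = eA1 k u * gA1 k u := by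
  simpa [eA1, gA1, map_mul] using RingQuot.mkAlgHom_rel k (A1rel.comm (k := k) (u := u))

lemma hg2 : gA1 k u * gA1 k u = 1 + (u - 1) • (eA1 k u + eA1 k u * gA1 k u) := by
  have h := RingQuot.mkAlgHom_rel k (A1rel.quad (k := k) (u := u))
  simp only [map_mul, map_add, map_one, AlgHom.commutes] at h
  rw [eA1, gA1]
  rw [h, Algebra.smul_def, mul_add, mul_one, mul_add, mul_assoc]

lemma heP (x : CA1 k u) : eA1 k u * (eA1 k u * x) = eA1 k u * x := by
  rw [← mul_assoc, he]

lemma hcommP (x : CA1 k u) : gA1 k u * (eA1 k u * x) = eA1 k u * (gA1 k u * x) := by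
  rw [← mul_assoc, hcomm, mul_assoc]

lemma hg2P (x : CA1 k u) : gA1 k u * (gA1 k u * x)
    = x + (u - 1) • (eA1 k u * x + eA1 k u * (gA1 k u * x)) := by
  rw [← mul_assoc, hg2, add_mul, one_mul, smul_mul_assoc, add_mul, mul_assoc]

lemma halg (c : k) (x : CA1 k u) : algebraMap k (CA1 k u) c * x = c • x :=
  (Algebra.smul_def _ _).symm

lemma e_a0 : eA1 k u * a0 k u = 0 := by
  simp only [a0, mul_add, mul_sub, add_mul, sub_mul, mul_one, one_mul, mul_assoc,
    he, hcomm, hg2, heP, hcommP, hg2P, halg, smul_add, smul_sub, mul_smul_comm]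
  abel

lemma e_a1 : eA1 k u * a1 k u = a1 k u := by
  simp only [a1, mul_add, mul_sub, add_mul, sub_mul, mul_one, one_mul, mul_assoc,
    he, hcomm, hg2, heP, hcommP, hg2P, halg, smul_add, smul_sub, mul_smul_comm]

lemma e_a2 : eA1 k u * a2 k u = 0 := by
  simp only [a2, mul_add, mul_sub, add_mul, sub_mul, mul_one, one_mul, mul_assoc,
    he, hcomm, hg2, heP, hcommP, hg2P, halg, smul_add, smul_sub, mul_smul_comm]
  abel

lemma e_a3 : eA1 k u * a3 k u = a3 k u := by
  simp only [a3, mul_add, mul_sub, add_mul, sub_mul, mul_one, one_mul, mul_assoc,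
    he, hcomm, hg2, heP, hcommP, hg2P, halg, smul_add, smul_sub, mul_smul_comm]

lemma g_a0 : gA1 k u * a0 k u = a0 k u := by
  simp only [a0, mul_add, mul_sub, add_mul, sub_mul, mul_one, one_mul, mul_assoc,
    he, hcomm, hg2, heP, hcommP, hg2P, halg, smul_add, smul_sub, mul_smul_comm]
  abel

lemma g_a1 : gA1 k u * a1 k u = u • a1 k u := by
  simp only [a1, mul_add, mul_sub, add_mul, sub_mul, mul_one, one_mul, mul_assoc,
    he, hcomm, hg2, heP, hcommP, hg2P, halg, smul_add, smul_sub, mul_smul_comm]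
  module

lemma g_a2 : gA1 k u * a2 k u = -(a2 k u) := by
  simp only [a2, mul_add, mul_sub, add_mul, sub_mul, mul_one, one_mul, mul_assoc,
    he, hcomm, hg2, heP, hcommP, hg2P, halg, smul_add, smul_sub, mul_smul_comm]
  module

lemma g_a3 : gA1 k u * a3 k u = -(a3 k u) := by
  simp only [a3, mul_add, mul_sub, add_mul, sub_mul, mul_one, one_mul, mul_assoc,
    he, hcomm, hg2, heP, hcommP, hg2P, halg, smul_add, smul_sub, mul_smul_comm]
  module

def gv : Fin 4 → k := ![1, u, -1, -1]
def ev : Fin 4 → k := ![0, 1, 0, 1]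

lemma relLift : ∀ ⦃x y : FreeAlgebra k Bool⦄, A1rel k u x y →
    (FreeAlgebra.lift k (fun b => if b then gv k u else ev k)) x
      = (FreeAlgebra.lift k (fun b => if b then gv k u else ev k)) y := by
  intro x y h
  induction h with
  | idem =>
      simp only [map_mul, FreeAlgebra.lift_ι_apply, ite_false]
      funext i; fin_cases i <;> simp [ev]
  | comm =>
      simp only [map_mul, FreeAlgebra.lift_ι_apply, ite_false, ite_true]
      funext i; fin_cases i <;> simp [ev, gv] <;> ring
  | quad =>
      simp only [map_mul, map_add, map_one, AlgHom.commutes, FreeAlgebra.lift_ι_apply,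
        ite_false, ite_true]
      funext i; fin_cases i <;>
        simp [ev, gv, Pi.algebraMap_apply, Matrix.vecHead, Matrix.vecTail] <;> ring

def phi : CA1 k u →ₐ[k] (Fin 4 → k) :=
  RingQuot.liftAlgHom k ⟨FreeAlgebra.lift k (fun b => if b then gv k u else ev k), relLift k u⟩

lemma phi_g : phi k u (gA1 k u) = gv k u := by
  simp [phi, gA1, RingQuot.liftAlgHom_mkAlgHom_apply, FreeAlgebra.lift_ι_apply]

lemma phi_e : phi k u (eA1 k u) = ev k := by
  simp [phi, eA1, RingQuot.liftAlgHom_mkAlgHom_apply, FreeAlgebra.lift_ι_apply]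

def M : Fin 4 → Fin 4 → k := ![![2,0,0,0], ![0,u+1,0,0], ![0,0,-2,0], ![0,0,0,-1-u]]

def av : Fin 4 → CA1 k u := ![a0 k u, a1 k u, a2 k u, a3 k u]

lemma phi_av (i : Fin 4) : phi k u (av k u i) = M k u i := by
  fin_cases i <;>
    · funext j
      fin_cases j <;>
        · simp [av, M, a0, a1, a2, a3, map_mul, map_add, map_sub, map_one,
            phi_g, phi_e, gv, ev, Pi.algebraMap_apply, Matrix.vecHead, Matrix.vecTail]
          try ring

lemma indep (hinv : IsUnit (2 * (u + 1))) : LinearIndependent k (av k u) := by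
  rw [Fintype.linearIndependent_iff]
  intro l hl
  have h2 : IsUnit (2 : k) := isUnit_of_mul_isUnit_left hinv
  have h1 : IsUnit (u + 1) := isUnit_of_mul_isUnit_right hinv
  have hφ := congrArg (phi k u) hl
  simp only [map_sum, map_smul, map_zero, phi_av] at hφ
  intro i
  fin_cases i
  · have hi := congrFun hφ 0
    simp [Fin.sum_univ_four, M, Matrix.vecHead, Matrix.vecTail] at hi
    exact (IsUnit.mul_left_eq_zero h2).mp hi
  · have hi := congrFun hφ 1
    simp [Fin.sum_univ_four, M, Matrix.vecHead, Matrix.vecTail] at hi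
    exact (IsUnit.mul_left_eq_zero h1).mp hi
  · have hi := congrFun hφ 2
    simp [Fin.sum_univ_four, M, Matrix.vecHead, Matrix.vecTail] at hi
    exact (IsUnit.mul_left_eq_zero h2).mp hi
  · have hi := congrFun hφ 3
    simp [Fin.sum_univ_four, M, Matrix.vecHead, Matrix.vecTail] at hi
    have h1' : IsUnit (-1 - u : k) := by
      have he' : (-1 - u : k) = -(u + 1) := by ring
      rw [he']; exact h1.neg
    exact (IsUnit.mul_left_eq_zero h1').mp hi

lemma id13 : a1 k u - a3 k u = (u + 1) • eA1 k u := by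
  simp only [a1, a3, mul_add, mul_sub, add_mul, sub_mul, mul_one, one_mul, mul_assoc,
    he, hcomm, hg2, heP, hcommP, hg2P, halg, smul_add, smul_sub, mul_smul_comm]
  module

lemma id_eg : eA1 k u * gA1 k u = a1 k u - eA1 k u := by
  simp only [a1, mul_add, mul_one]; abel

lemma id02m : a0 k u - a2 k u = (2 : k) • ((1 : CA1 k u) - eA1 k u) := by
  simp only [a0, a2, mul_add, mul_sub, add_mul, sub_mul, mul_one, one_mul, mul_assoc,
    he, hcomm, hg2, heP, hcommP, hg2P, halg, smul_add, smul_sub, mul_smul_comm]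
  module

lemma id02p : a0 k u + a2 k u = (2 : k) • (gA1 k u - eA1 k u * gA1 k u) := by
  simp only [a0, a2, mul_add, mul_sub, add_mul, sub_mul, mul_one, one_mul, mul_assoc,
    he, hcomm, hg2, heP, hcommP, hg2P, halg, smul_add, smul_sub, mul_smul_comm]
  module

lemma pegg : gA1 k u * (eA1 k u * gA1 k u)
    = eA1 k u + (u - 1) • (eA1 k u + eA1 k u * gA1 k u) := by
  simp only [mul_add, mul_sub, add_mul, sub_mul, mul_one, one_mul, mul_assoc,
    he, hcomm, hg2, heP, hcommP, hg2P, halg, smul_add, smul_sub, mul_smul_comm]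

lemma span_top (hinv : IsUnit (2 * (u + 1))) :
    Submodule.span k (Set.range (av k u)) = ⊤ := by
  obtain ⟨w0, hw0⟩ := hinv
  set w : k := ((w0⁻¹ : kˣ) : k) with hwdef
  have hw : (2 * (u + 1)) * w = 1 := by
    rw [← hw0, hwdef]; exact_mod_cast w0.mul_inv
  set S := Submodule.span k (Set.range (av k u)) with hS
  have m0 : a0 k u ∈ S := Submodule.subset_span ⟨0, rfl⟩
  have m1 : a1 k u ∈ S := Submodule.subset_span ⟨1, rfl⟩
  have m2 : a2 k u ∈ S := Submodule.subset_span ⟨2, rfl⟩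
  have m3 : a3 k u ∈ S := Submodule.subset_span ⟨3, rfl⟩
  have hE : eA1 k u ∈ S := by
    have hc : (2 * w) * (u + 1) = 1 := by linear_combination hw
    have : eA1 k u = (2 * w) • (a1 k u - a3 k u) := by
      rw [id13, smul_smul, hc, one_smul]
    rw [this]; exact Submodule.smul_mem _ _ (sub_mem m1 m3)
  have hEG : eA1 k u * gA1 k u ∈ S := by
    rw [id_eg]; exact sub_mem m1 hE
  have h1S : (1 : CA1 k u) ∈ S := by
    have hq : ((u + 1) * w) * 2 = 1 := by linear_combination hw
    have : (1 : CA1 k u) = ((u + 1) * w) • (a0 k u - a2 k u) + eA1 k u := by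
      rw [id02m, smul_smul, hq, one_smul, sub_add_cancel]
    rw [this]; exact add_mem (Submodule.smul_mem _ _ (sub_mem m0 m2)) hE
  have hGS : gA1 k u ∈ S := by
    have hq : ((u + 1) * w) * 2 = 1 := by linear_combination hw
    have : gA1 k u = ((u + 1) * w) • (a0 k u + a2 k u) + eA1 k u * gA1 k u := by
      rw [id02p, smul_smul, hq, one_smul, sub_add_cancel]
    rw [this]; exact add_mem (Submodule.smul_mem _ _ (add_mem m0 m2)) hEG
  -- T : span of 1, e, g, eg
  set T : Submodule k (CA1 k u) :=
    Submodule.span k {(1 : CA1 k u), eA1 k u, gA1 k u, eA1 k u * gA1 k u} with hT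
  have t1 : (1 : CA1 k u) ∈ T := Submodule.subset_span (by simp)
  have te : eA1 k u ∈ T := Submodule.subset_span (by simp)
  have tg : gA1 k u ∈ T := Submodule.subset_span (by simp)
  have teg : eA1 k u * gA1 k u ∈ T := Submodule.subset_span (by simp)
  have leftE : ∀ x ∈ T, eA1 k u * x ∈ T := by
    intro x hx
    induction hx using Submodule.span_induction with
    | mem x hx =>
        rcases hx with rfl | rfl | rfl | rfl
        · rw [mul_one]; exact te
        · rw [he]; exact te
        · exact teg
        · rw [heP]; exact teg
    | zero => rw [mul_zero]; exact zero_mem T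
    | add x y hx hy ihx ihy => rw [mul_add]; exact add_mem ihx ihy
    | smul c x hx ihx => rw [mul_smul_comm]; exact Submodule.smul_mem _ _ ihx
  have leftG : ∀ x ∈ T, gA1 k u * x ∈ T := by
    intro x hx
    induction hx using Submodule.span_induction with
    | mem x hx =>
        rcases hx with rfl | rfl | rfl | rfl
        · rw [mul_one]; exact tg
        · rw [hcomm]; exact teg
        · rw [hg2]
          exact add_mem t1 (Submodule.smul_mem _ _ (add_mem te teg))
        · rw [pegg]
          exact add_mem te (Submodule.smul_mem _ _ (add_mem te teg))
    | zero => rw [mul_zero]; exact zero_mem T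
    | add x y hx hy ihx ihy => rw [mul_add]; exact add_mem ihx ihy
    | smul c x hx ihx => rw [mul_smul_comm]; exact Submodule.smul_mem _ _ ihx
  have hmulT : ∀ x ∈ T, ∀ y ∈ T, x * y ∈ T := by
    intro x hx
    induction hx using Submodule.span_induction with
    | mem x hx =>
        rcases hx with rfl | rfl | rfl | rfl
        · intro y hy; rw [one_mul]; exact hy
        · exact leftE
        · exact leftG
        · intro y hy; rw [mul_assoc]; exact leftE _ (leftG _ hy)
    | zero => intro y hy; rw [zero_mul]; exact zero_mem T
    | add x x' hx hx' ihx ihx' =>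
        intro y hy; rw [add_mul]; exact add_mem (ihx y hy) (ihx' y hy)
    | smul c x hx ihx =>
        intro y hy; rw [smul_mul_assoc]; exact Submodule.smul_mem _ _ (ihx y hy)
  have hTtop : ∀ x : CA1 k u, x ∈ T := by
    intro x
    obtain ⟨y, rfl⟩ := RingQuot.mkAlgHom_surjective k (A1rel k u) x
    induction y using FreeAlgebra.induction with
    | grade0 r =>
        rw [AlgHom.commutes]
        rw [Algebra.algebraMap_eq_smul_one]
        exact Submodule.smul_mem _ _ t1
    | grade1 b =>
        cases b
        · exact te
        · exact tg
    | mul x y ihx ihy => rw [map_mul]; exact hmulT _ ihx _ ihy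
    | add x y ihx ihy => rw [map_add]; exact add_mem ihx ihy
  have hTS : T ≤ S := by
    rw [hT, Submodule.span_le]
    rintro x (rfl | rfl | rfl | rfl)
    · exact h1S
    · exact hE
    · exact hGS
    · exact hEG
  exact Submodule.eq_top_iff'.mpr fun x => hTS (hTtop x)


/-- **Statement 14.** If `2(u+1)` is invertible in `k`, then `(a₀, a₁, a₂, a₃)` is a
`k`-basis of `C_{A₁}(u)` consisting of simultaneous eigenvectors of left multiplication
by `e` and `g`, with the stated eigenvalues; consequently `g + λge` acts on this basis
with eigenvalues `1, u(1+λ), −1, −(1+λ)`. -/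
theorem statement14 (hinv : IsUnit (2 * (u + 1))) :
    (∃ b : Module.Basis (Fin 4) k (CA1 k u),
      b 0 = a0 k u ∧ b 1 = a1 k u ∧ b 2 = a2 k u ∧ b 3 = a3 k u) ∧
    eA1 k u * a0 k u = 0 ∧
    eA1 k u * a1 k u = a1 k u ∧
    eA1 k u * a2 k u = 0 ∧
    eA1 k u * a3 k u = a3 k u ∧
    gA1 k u * a0 k u = a0 k u ∧
    gA1 k u * a1 k u = u • a1 k u ∧
    gA1 k u * a2 k u = -(a2 k u) ∧
    gA1 k u * a3 k u = -(a3 k u) ∧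
    (∀ lam : k,
      (gA1 k u + lam • (gA1 k u * eA1 k u)) * a0 k u = a0 k u ∧
      (gA1 k u + lam • (gA1 k u * eA1 k u)) * a1 k u = (u * (1 + lam)) • a1 k u ∧
      (gA1 k u + lam • (gA1 k u * eA1 k u)) * a2 k u = -(a2 k u) ∧
      (gA1 k u + lam • (gA1 k u * eA1 k u)) * a3 k u = (-(1 + lam)) • a3 k u) := by
  refine ⟨⟨Module.Basis.mk (indep k u hinv) (span_top k u hinv).ge, ?_, ?_, ?_, ?_⟩,
    e_a0 k u, e_a1 k u, e_a2 k u, e_a3 k u,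
    g_a0 k u, g_a1 k u, g_a2 k u, g_a3 k u, ?_⟩
  · rw [Module.Basis.mk_apply]; rfl
  · rw [Module.Basis.mk_apply]; rfl
  · rw [Module.Basis.mk_apply]; rfl
  · rw [Module.Basis.mk_apply]; rfl
  intro lam
  refine ⟨?_, ?_, ?_, ?_⟩
  · rw [add_mul, smul_mul_assoc, mul_assoc, e_a0, mul_zero, smul_zero, add_zero, g_a0]
  · rw [add_mul, smul_mul_assoc, mul_assoc, e_a1, g_a1]; module
  · rw [add_mul, smul_mul_assoc, mul_assoc, e_a2, mul_zero, smul_zero, add_zero, g_a2]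
  · rw [add_mul, smul_mul_assoc, mul_assoc, e_a3, g_a3]; module

end CWpaper
end
end

section
/- Let k be a commutative ring, A an associative unital k-algebra, M a left A-module, 𝒫 a finite partially ordered set, and (e_L)_{L∈𝒫} a family of elements of M which generates M as an A-module. For L ∈ 𝒫 set E_L = Σ_{F ≤ L} A·e_F and E'_L = Σ_{F < L} A·e_F (submodules of M). Suppose that for each L ∈ 𝒫 there are elements b_{L,1}, …, b_{L,n} ∈ A such that the quotient k-module E_L / E'_L is spanned over k by the images of b_{L,1}·e_L, …, b_{L,n}·e_L. Then M is spanned as a k-module by the n·|𝒫| elements b_{L,i}·e_L for L ∈ 𝒫 and 1 ≤ i ≤ n. -/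
noncomputable section

namespace CWpaper

/-- **Statement 18** (abstract spanning lemma). Let `M` be an `A`-module generated by a
family `(e_L)_{L ∈ 𝒫}` indexed by a finite poset `𝒫`, and set
`E_L = Σ_{F ≤ L} A·e_F`, `E'_L = Σ_{F < L} A·e_F`. If for each `L` the quotient
`E_L / E'_L` is spanned over `k` by the images of `b_{L,1}·e_L, …, b_{L,n}·e_L`, then `M`
is spanned over `k` by the `n·|𝒫|` elements `b_{L,i}·e_L`. -/
theorem statement18 (k A M : Type) [CommRing k] [Ring A] [Algebra k A]
    [AddCommGroup M] [Module k M] [Module A M] [IsScalarTower k A M]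
    (P : Type) [PartialOrder P] [Finite P]
    (e : P → M) (hgen : Submodule.span A (Set.range e) = ⊤)
    (n : ℕ) (b : P → Fin n → A)
    (hquot : ∀ L : P,
      (Submodule.span A {m : M | ∃ F ≤ L, m = e F}).restrictScalars k ≤
        (Submodule.span A {m : M | ∃ F < L, m = e F}).restrictScalars k ⊔
          Submodule.span k (Set.range fun i : Fin n => b L i • e L)) :
    Submodule.span k (Set.range fun p : P × Fin n => b p.1 p.2 • e p.1) = ⊤ := by
  set S := Submodule.span k (Set.range fun p : P × Fin n => b p.1 p.2 • e p.1) with hS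
  have key : ∀ L : P, ∀ m ∈ Submodule.span A {m : M | ∃ F ≤ L, m = e F}, m ∈ S := by
    intro L
    induction L using WellFoundedLT.induction with
    | _ L IH =>
      intro m hm
      have h1 := hquot L (by simpa using hm)
      rw [Submodule.mem_sup] at h1
      obtain ⟨y, hy, z, hz, rfl⟩ := h1
      have hy' : y ∈ Submodule.span A {m : M | ∃ F < L, m = e F} := hy
      have hyS : y ∈ S := by
        have hle : Submodule.span A {m : M | ∃ F < L, m = e F} ≤
            ⨆ F : {F : P // F < L}, Submodule.span A {m : M | ∃ G ≤ F.1, m = e G} := by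
          rw [Submodule.span_le]
          rintro x ⟨F, hF, rfl⟩
          exact Submodule.mem_iSup_of_mem ⟨F, hF⟩
            (Submodule.subset_span ⟨F, le_refl F, rfl⟩)
        refine Submodule.iSup_induction (motive := fun x => x ∈ S) _ (hle hy') ?_ (Submodule.zero_mem S)
          (fun a c ha hc => Submodule.add_mem S ha hc)
        rintro ⟨F, hF⟩ x hx
        exact IH F hF x hx
      have hzS : z ∈ S := by
        refine Submodule.span_mono ?_ hz
        rintro x ⟨i, rfl⟩
        exact ⟨(L, i), rfl⟩
      exact S.add_mem hyS hzS
  rw [eq_top_iff]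
  intro m _
  have hm : m ∈ Submodule.span A (Set.range e) := by rw [hgen]; trivial
  have hle : Submodule.span A (Set.range e) ≤
      ⨆ L : P, Submodule.span A {m : M | ∃ F ≤ L, m = e F} := by
    rw [Submodule.span_le]
    rintro x ⟨L, rfl⟩
    exact Submodule.mem_iSup_of_mem L (Submodule.subset_span ⟨L, le_refl L, rfl⟩)
  refine Submodule.iSup_induction (motive := fun x => x ∈ S) _ (hle hm) ?_ (Submodule.zero_mem S)
    (fun a c ha hc => Submodule.add_mem S ha hc)
  exact fun L x hx => key L x hx

end CWpaper
end
end

section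
/- Let m ≥ 1 and let W be the dihedral group of order 2m (the Coxeter group of type I₂(m)), with R ⊆ W its set of reflections (the m reflections of the regular m-gon). Then the number of reflection subgroups of W — i.e. of subgroups of the form ⟨T⟩ for some subset T ⊆ R, including the trivial subgroup ⟨∅⟩ — equals 1 + σ(m), where σ(m) is the sum of the positive divisors of m. -/
noncomputable section

namespace CWpaper

open DihedralGroup

variable {m : ℕ}

/-- The reflection subgroup attached to a divisor `e` of `m` and `j : ZMod e`:
rotations `r x` with `x ≡ 0 mod e` and reflections `sr y` with `y ≡ j mod e`. -/
def K (m e : ℕ) (he : e ∣ m) (j : ZMod e) : Subgroup (DihedralGroup m) where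
  carrier := {g | match g with
    | .r x => ZMod.castHom he (ZMod e) x = 0
    | .sr y => ZMod.castHom he (ZMod e) y = j}
  one_mem' := by show ZMod.castHom he (ZMod e) 0 = 0; simp
  mul_mem' := by
    rintro (x | x) (y | y) hx hy <;>
      simp only [Set.mem_setOf_eq, r_mul_r, r_mul_sr, sr_mul_r, sr_mul_sr, map_add, map_sub] at *
        <;> rw [hx, hy] <;> ring
  inv_mem' := by
    rintro (x | x) hx <;>
      simp only [Set.mem_setOf_eq] at *
    · show ZMod.castHom he (ZMod e) (-x) = 0
      rw [map_neg, hx, neg_zero]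
    · exact hx

theorem mem_K_r (m e : ℕ) (he : e ∣ m) (j : ZMod e) (x : ZMod m) :
    r x ∈ K m e he j ↔ ZMod.castHom he (ZMod e) x = 0 := Iff.rfl

theorem mem_K_sr (m e : ℕ) (he : e ∣ m) (j : ZMod e) (y : ZMod m) :
    sr y ∈ K m e he j ↔ ZMod.castHom he (ZMod e) y = j := Iff.rfl

theorem castHom_lift (m e : ℕ) [NeZero e] (he : e ∣ m) (j : ZMod e) :
    ZMod.castHom he (ZMod e) ((j.val : ZMod m)) = j := by
  rw [map_natCast, ZMod.natCast_zmod_val]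

/-- `K m e he j` is generated by its reflections. -/
theorem K_eq_closure (m e : ℕ) [NeZero e] (he : e ∣ m) (j : ZMod e) :
    Subgroup.closure {g : DihedralGroup m |
        ∃ y : ZMod m, ZMod.castHom he (ZMod e) y = j ∧ g = sr y} = K m e he j := by
  apply le_antisymm
  · rw [Subgroup.closure_le]
    rintro g ⟨y, hy, rfl⟩
    exact hy
  · rintro (x | y) hg
    · have h1 : sr ((j.val : ZMod m)) ∈ Subgroup.closure {g : DihedralGroup m |
          ∃ y : ZMod m, ZMod.castHom he (ZMod e) y = j ∧ g = sr y} :=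
        Subgroup.subset_closure ⟨_, castHom_lift m e he j, rfl⟩
      have h2 : sr ((j.val : ZMod m) + x) ∈ Subgroup.closure {g : DihedralGroup m |
          ∃ y : ZMod m, ZMod.castHom he (ZMod e) y = j ∧ g = sr y} := by
        refine Subgroup.subset_closure ⟨_, ?_, rfl⟩
        rw [map_add, castHom_lift m e he j, hg, add_zero]
      have := mul_mem h1 h2
      rw [sr_mul_sr] at this
      simpa using this
    · exact Subgroup.subset_closure ⟨y, hg, rfl⟩

/-- The index type. -/
def Idx (m : ℕ) := Option ((e : {e // e ∈ m.divisors}) × ZMod e.1)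

def refSubtype (m : ℕ) := {H : Subgroup (DihedralGroup m) //
    ∃ T : Set (DihedralGroup m),
      (∀ x ∈ T, ∃ i : ZMod m, x = DihedralGroup.sr i) ∧ Subgroup.closure T = H}

def f (m : ℕ) : Idx m → refSubtype m
  | none => ⟨⊥, ∅, by simp, Subgroup.closure_empty⟩
  | some ⟨⟨e, he⟩, j⟩ =>
    ⟨K m e (Nat.dvd_of_mem_divisors he) j,
      {g : DihedralGroup m |
        ∃ y : ZMod m, ZMod.castHom (Nat.dvd_of_mem_divisors he) (ZMod e) y = j ∧ g = sr y},
      fun x ⟨y, _, hxy⟩ => ⟨y, hxy⟩,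
      haveI : NeZero e := ⟨Nat.pos_of_mem_divisors he |>.ne'⟩
      K_eq_closure m e (Nat.dvd_of_mem_divisors he) j⟩

theorem f_injective (m : ℕ) : Function.Injective (f m) := by
  have key : ∀ (e e' : ℕ) (he : e ∈ m.divisors) (he' : e' ∈ m.divisors)
      (j : ZMod e) (j' : ZMod e'),
      K m e (Nat.dvd_of_mem_divisors he) j = K m e' (Nat.dvd_of_mem_divisors he') j' →
      e' ∣ e := by
    intro e e' he he' j j' hK
    haveI : NeZero e' := ⟨Nat.pos_of_mem_divisors he' |>.ne'⟩
    have hr : DihedralGroup.r ((e : ZMod m)) ∈ K m e (Nat.dvd_of_mem_divisors he) j := by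
      rw [mem_K_r, map_natCast]
      exact (ZMod.natCast_eq_zero_iff e e).mpr dvd_rfl
    rw [hK, mem_K_r, map_natCast] at hr
    exact (ZMod.natCast_eq_zero_iff e e').mp hr
  rintro (_ | ⟨⟨e, he⟩, j⟩) (_ | ⟨⟨e', he'⟩, j'⟩) hf
  · rfl
  · exfalso
    haveI : NeZero e' := ⟨Nat.pos_of_mem_divisors he' |>.ne'⟩
    have hK : (⊥ : Subgroup (DihedralGroup m)) =
        K m e' (Nat.dvd_of_mem_divisors he') j' := congrArg Subtype.val hf
    have : sr ((j'.val : ZMod m)) ∈ K m e' (Nat.dvd_of_mem_divisors he') j' :=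
      castHom_lift m e' _ j'
    rw [← hK, Subgroup.mem_bot] at this
    exact absurd this (by simp [-DihedralGroup.r_zero, DihedralGroup.one_def])
  · exfalso
    haveI : NeZero e := ⟨Nat.pos_of_mem_divisors he |>.ne'⟩
    have hK : K m e (Nat.dvd_of_mem_divisors he) j =
        (⊥ : Subgroup (DihedralGroup m)) := congrArg Subtype.val hf
    have : sr ((j.val : ZMod m)) ∈ K m e (Nat.dvd_of_mem_divisors he) j :=
      castHom_lift m e _ j
    rw [hK, Subgroup.mem_bot] at this
    exact absurd this (by simp [-DihedralGroup.r_zero, DihedralGroup.one_def])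
  · have hK : K m e (Nat.dvd_of_mem_divisors he) j =
        K m e' (Nat.dvd_of_mem_divisors he') j' := congrArg Subtype.val hf
    have hee' : e = e' :=
      Nat.dvd_antisymm (key e' e he' he j' j hK.symm) (key e e' he he' j j' hK)
    subst hee'
    haveI : NeZero e := ⟨Nat.pos_of_mem_divisors he |>.ne'⟩
    have hj : j = j' := by
      have h1 : sr ((j.val : ZMod m)) ∈ K m e (Nat.dvd_of_mem_divisors he) j :=
        castHom_lift m e _ j
      rw [hK, mem_K_sr] at h1
      rw [← h1, castHom_lift m e _ j]
    subst hj
    rfl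

theorem f_surjective (m : ℕ) (hm : 1 ≤ m) : Function.Surjective (f m) := by
  haveI : NeZero m := ⟨(Nat.one_le_iff_ne_zero.mp hm)⟩
  rintro ⟨H, T, hT, hcl⟩
  by_cases hTe : T = ∅
  · refine ⟨none, ?_⟩
    apply Subtype.ext
    show ⊥ = H
    rw [← hcl, hTe, Subgroup.closure_empty]
  · -- T nonempty: pick sr a ∈ T
    obtain ⟨t, ht⟩ := Set.nonempty_iff_ne_empty.mpr hTe
    obtain ⟨a, rfl⟩ := hT t ht
    have hsra : sr a ∈ H := hcl ▸ Subgroup.subset_closure ht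
    -- the rotation part of H, as an AddSubgroup of ZMod m
    set A : AddSubgroup (ZMod m) :=
      { carrier := {x | DihedralGroup.r x ∈ H}
        zero_mem' := by show r 0 ∈ H; rw [← DihedralGroup.one_def]; exact one_mem H
        add_mem' := fun {x y} (hx : r x ∈ H) (hy : r y ∈ H) => by
          have := mul_mem hx hy
          rwa [r_mul_r] at this
        neg_mem' := fun {x} (hx : r x ∈ H) => by
          have := inv_mem hx
          rwa [show (r x)⁻¹ = r (-x) from rfl] at this } with hA
    have memA : ∀ x : ZMod m, x ∈ A ↔ DihedralGroup.r x ∈ H := fun x => Iff.rfl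
    -- pull back to ℤ
    obtain ⟨k, hk⟩ := Int.subgroup_cyclic (A.comap (Int.castAddHom (ZMod m)))
    rw [← AddSubgroup.zmultiples_eq_closure] at hk
    have hmB : (m : ℤ) ∈ A.comap (Int.castAddHom (ZMod m)) := by
      show ((m : ℤ) : ZMod m) ∈ A
      simp only [Int.cast_natCast, ZMod.natCast_self]
      exact A.zero_mem
    rw [hk, AddSubgroup.mem_zmultiples_iff] at hmB
    obtain ⟨c, hc⟩ := hmB
    have hkm : k ∣ (m : ℤ) := ⟨c, by rw [← hc, smul_eq_mul, mul_comm]⟩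
    set e : ℕ := k.natAbs with he_def
    have hem : e ∣ m := by simpa using Int.natAbs_dvd_natAbs.mpr hkm
    have he0 : e ≠ 0 := by
      rintro h
      rw [he_def, Int.natAbs_eq_zero] at h
      rw [h] at hkm
      simp only [zero_dvd_iff, Nat.cast_eq_zero] at hkm
      exact (Nat.one_le_iff_ne_zero.mp hm) hkm
    haveI : NeZero e := ⟨he0⟩
    have hemem : e ∈ m.divisors := Nat.mem_divisors.mpr ⟨hem, (Nat.one_le_iff_ne_zero.mp hm)⟩
    -- characterize A
    have hA_iff : ∀ x : ZMod m, x ∈ A ↔ ZMod.castHom hem (ZMod e) x = 0 := by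
      intro x
      have hx : x = ((x.val : ℤ) : ZMod m) := by
        simp [ZMod.natCast_zmod_val]
      constructor
      · intro hxA
        have : ((x.val : ℤ) : ZMod m) ∈ A := hx ▸ hxA
        have hmem : (x.val : ℤ) ∈ A.comap (Int.castAddHom (ZMod m)) := this
        rw [hk, AddSubgroup.mem_zmultiples_iff] at hmem
        obtain ⟨t, ht2⟩ := hmem
        have hdvdk : k ∣ (x.val : ℤ) := ⟨t, by rw [← ht2, smul_eq_mul, mul_comm]⟩
        have hdvd : (e : ℤ) ∣ (x.val : ℤ) := Int.natAbs_dvd.mpr hdvdk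
        have : e ∣ x.val := Int.natCast_dvd_natCast.mp hdvd
        rw [show x = ((x.val : ℕ) : ZMod m) from (ZMod.natCast_zmod_val x).symm,
          map_natCast]
        exact (ZMod.natCast_eq_zero_iff _ _).mpr this
      · intro hcast
        rw [show x = ((x.val : ℕ) : ZMod m) from (ZMod.natCast_zmod_val x).symm,
          map_natCast] at hcast
        have hdvd : e ∣ x.val := (ZMod.natCast_eq_zero_iff _ _).mp hcast
        have hdvdk : k ∣ (x.val : ℤ) :=
          dvd_trans (Int.dvd_natAbs.mpr dvd_rfl) (Int.natCast_dvd_natCast.mpr hdvd)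
        obtain ⟨t, ht2⟩ := hdvdk
        have : (x.val : ℤ) ∈ AddSubgroup.zmultiples k := by
          rw [AddSubgroup.mem_zmultiples_iff]
          exact ⟨t, by rw [smul_eq_mul, mul_comm, ← ht2]⟩
        rw [← hk] at this
        have : ((x.val : ℤ) : ZMod m) ∈ A := this
        rwa [← hx] at this
    refine ⟨some ⟨⟨e, hemem⟩, ZMod.castHom hem (ZMod e) a⟩, ?_⟩
    apply Subtype.ext
    show K m e hem (ZMod.castHom hem (ZMod e) a) = H
    apply le_antisymm
    · rintro (x | y) hg
      · rw [mem_K_r] at hg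
        exact (hA_iff x).mpr hg
      · rw [mem_K_sr] at hg
        have hya : y - a ∈ A := by
          rw [hA_iff, map_sub, hg, sub_self]
        have := mul_mem hsra ((memA _).mp hya)
        rwa [sr_mul_r, add_sub_cancel] at this
    · rw [← hcl, Subgroup.closure_le]
      intro x hx
      obtain ⟨i, rfl⟩ := hT x hx
      have hsri : sr i ∈ H := hcl ▸ Subgroup.subset_closure hx
      have := mul_mem hsra hsri
      rw [sr_mul_sr] at this
      have hia : i - a ∈ A := (memA _).mpr this
      rw [hA_iff, map_sub, sub_eq_zero] at hia
      exact hia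

/-- **Statement 19.** For `m ≥ 1`, the number of reflection subgroups of the dihedral
group of order `2m` — subgroups generated by a set of reflections `sr i` — equals
`1 + σ(m)`, the sum of the positive divisors of `m` plus one. -/
theorem statement19 (m : ℕ) (hm : 1 ≤ m) :
    Nat.card {H : Subgroup (DihedralGroup m) //
        ∃ T : Set (DihedralGroup m),
          (∀ x ∈ T, ∃ i : ZMod m, x = DihedralGroup.sr i) ∧ Subgroup.closure T = H} =
      1 + ∑ d ∈ Nat.divisors m, d := by
  have hbij : Nat.card (Idx m) = Nat.card (refSubtype m) :=
    Nat.card_eq_of_bijective (f m) ⟨f_injective m, f_surjective m hm⟩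
  have hcard : Nat.card (Idx m) = 1 + ∑ d ∈ Nat.divisors m, d := by
    haveI inst : ∀ e : {e // e ∈ m.divisors}, NeZero (e.1) :=
      fun e => ⟨(Nat.pos_of_mem_divisors e.2).ne'⟩
    haveI : ∀ e : {e // e ∈ m.divisors}, Fintype (ZMod e.1) := fun e => ZMod.fintype e.1
    rw [show Idx m = Option ((e : {e // e ∈ m.divisors}) × ZMod e.1) from rfl]
    rw [Nat.card_eq_fintype_card, Fintype.card_option, Fintype.card_sigma]
    have : ∀ e : {e // e ∈ m.divisors}, Fintype.card (ZMod e.1) = e.1 := fun e => ZMod.card e.1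
    rw [Finset.sum_congr rfl (fun e _ => this e)]
    rw [add_comm, Finset.sum_coe_sort m.divisors (fun d => d)]
  show Nat.card (refSubtype m) = _
  rw [← hbij, hcard]

end CWpaper
end
end
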